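/- Let e : L → C be a canonical extension of a bounded lattice L. Then: (1) for all finite T, U ⊆ L, ⟨T⟩_ai ⊆ ⟨U⟩_ai if and only if ⋃_{a∈T} â ⊆ ⋃_{b∈U} b̂ (in particular the assignment ⟨T⟩_ai ↦ ⋃_{a∈T} â is well-defined and an order embedding of the finitely generated a-ideals of L, ordered by inclusion, into the powerset of J∞(C)); and (2) a subset of J∞(C) belongs to the sublattice of the powerset of J∞(C) generated by {â : a ∈ L} (under union and intersection) if and only if it equals ⋃_{a∈T} â for some finite T ⊆ L. Hence this assignment is an order isomorphism onto that sublattice. -/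

import Mathlib

/-- A finite subset `M` of a bounded lattice is join-admissible if its join
distributes over all meets with elements of the lattice. -/
def JoinAdmissible {L : Type*} [Lattice L] [BoundedOrder L] (M : Finset L) : Prop :=
  ∀ a : L, a ⊓ M.sup id = M.sup fun m => a ⊓ m

/-- An a-ideal: a downward-closed subset closed under admissible joins. -/
def IsAIdeal {L : Type*} [Lattice L] [BoundedOrder L] (A : Set L) : Prop :=
  (∀ a ∈ A, ∀ b, b ≤ a → b ∈ A) ∧
  ∀ M : Finset L, ↑M ⊆ A → JoinAdmissible M → M.sup id ∈ A

/-- The smallest a-ideal containing `T`. -/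
def aIdealGen {L : Type*} [Lattice L] [BoundedOrder L] (T : Set L) : Set L :=
  ⋂₀ {A : Set L | IsAIdeal A ∧ T ⊆ A}

/-- An element `x` of a complete lattice is completely join-irreducible if
`x ∈ S` whenever `x = ⨆ S`. -/
def CompletelyJoinIrreducible {C : Type*} [CompleteLattice C] (x : C) : Prop :=
  ∀ S : Set C, x = sSup S → x ∈ S

/-- An element `y` of a complete lattice is completely meet-irreducible if
`y ∈ S` whenever `y = ⨅ S`. -/
def CompletelyMeetIrreducible {C : Type*} [CompleteLattice C] (y : C) : Prop :=
  ∀ S : Set C, y = sInf S → y ∈ S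

/-- `e : L → C` is a canonical extension of the bounded lattice `L`: an injective
bounded-lattice homomorphism into a complete lattice `C` which is dense and compact. -/
def IsCanonicalExtension {L C : Type*} [Lattice L] [BoundedOrder L] [CompleteLattice C]
    (e : L → C) : Prop :=
  Function.Injective e ∧
  (∀ a b : L, e (a ⊓ b) = e a ⊓ e b) ∧
  (∀ a b : L, e (a ⊔ b) = e a ⊔ e b) ∧
  e ⊥ = ⊥ ∧ e ⊤ = ⊤ ∧
  -- denseness
  (∀ u : C,
    u = sSup {v : C | ∃ S : Set L, v = sInf (e '' S) ∧ v ≤ u} ∧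
    u = sInf {v : C | ∃ T : Set L, v = sSup (e '' T) ∧ u ≤ v}) ∧
  -- compactness
  (∀ S T : Set L, sInf (e '' S) ≤ sSup (e '' T) →
    ∃ S' T' : Finset L, ↑S' ⊆ S ∧ ↑T' ⊆ T ∧ S'.inf id ≤ T'.sup id)

/-- `â`: the set of completely join-irreducible elements of `C` below `e a`. -/
def hatSet {L C : Type*} [Lattice L] [BoundedOrder L] [CompleteLattice C]
    (e : L → C) (a : L) : Set C :=
  {x : C | CompletelyJoinIrreducible x ∧ x ≤ e a}

/-- The sublattice of the powerset of `α` generated by a family `G` of subsets: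
the smallest collection containing `G` closed under binary unions and intersections. -/
def latticeGen {α : Type*} (G : Set (Set α)) : Set (Set α) :=
  ⋂₀ {F : Set (Set α) | G ⊆ F ∧ (∀ A ∈ F, ∀ B ∈ F, A ∪ B ∈ F) ∧
      (∀ A ∈ F, ∀ B ∈ F, A ∩ B ∈ F)}


section Aux

variable {L C : Type*} [Lattice L] [BoundedOrder L] [CompleteLattice C] {e : L → C}

namespace CE

set_option linter.unusedSectionVars false

lemma mono (h : IsCanonicalExtension e) : Monotone e := by
  intro a b hab
  have : e (a ⊓ b) = e a ⊓ e b := h.2.1 a b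
  rw [inf_eq_left.mpr hab] at this
  rw [this]; exact inf_le_right

lemma reflect (h : IsCanonicalExtension e) {a b : L} (hab : e a ≤ e b) : a ≤ b := by
  have : e (a ⊓ b) = e a := by rw [h.2.1]; exact inf_eq_left.mpr hab
  have := h.1 this
  exact inf_eq_left.mp this

lemma map_finsetSup (h : IsCanonicalExtension e) {β : Type*} (M : Finset β) (f : β → L) :
    e (M.sup f) = M.sup fun m => e (f m) := by
  have := Finset.comp_sup_eq_sup_comp (s := M) (f := f) e (h.2.2.1) (h.2.2.2.1)
  exact this

lemma map_finsetInf (h : IsCanonicalExtension e) {β : Type*} (M : Finset β) (f : β → L) :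
    e (M.inf f) = M.inf fun m => e (f m) := by
  have := Finset.comp_inf_eq_inf_comp (s := M) (f := f) e (h.2.1) (h.2.2.2.2.1)
  exact this

lemma not_cji_bot : ¬ CompletelyJoinIrreducible (⊥ : C) := by
  intro hb
  have := hb ∅ (by simp)
  simp at this

/-- the canonical closed representation -/
lemma closed_rep (h : IsCanonicalExtension e) {x : C} (hx : ∃ S : Set L, x = sInf (e '' S)) :
    x = sInf (e '' {a | x ≤ e a}) := by
  obtain ⟨S, hS⟩ := hx
  apply le_antisymm
  · exact le_sInf (by rintro _ ⟨a, ha, rfl⟩; exact ha)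
  · refine le_trans (sInf_le_sInf ?_) hS.ge
    rintro _ ⟨a, ha, rfl⟩
    exact ⟨a, by rw [hS]; exact sInf_le ⟨a, ha, rfl⟩, rfl⟩

/-- A completely join-irreducible element is closed. -/
lemma cji_closed (h : IsCanonicalExtension e) {j : C} (hj : CompletelyJoinIrreducible j) :
    j = sInf (e '' {a | j ≤ e a}) := by
  apply closed_rep h
  have hd := (h.2.2.2.2.2.1 j).1
  have := hj _ hd
  obtain ⟨S, hS, -⟩ := this
  exact ⟨S, hS⟩

/-- The filter of a closed element is closed under finite meets. -/
lemma filter_finsetInf (h : IsCanonicalExtension e) {x : C} {M : Finset L} (hM : ∀ a ∈ M, x ≤ e a) :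
    x ≤ e (M.inf id) := by
  rw [map_finsetInf h]
  exact Finset.le_inf (by simpa using hM)

/-- Compactness for a closed element below an open element. -/
lemma closed_le_open (h : IsCanonicalExtension e) {x : C} (hx : x = sInf (e '' {a | x ≤ e a})) {T : Set L}
    (hle : x ≤ sSup (e '' T)) :
    ∃ s : L, x ≤ e s ∧ ∃ T' : Finset L, ↑T' ⊆ T ∧ s ≤ T'.sup id := by
  have := h.2.2.2.2.2.2 {a | x ≤ e a} T (by rw [← hx]; exact hle)
  obtain ⟨S', T', hS', hT', hle'⟩ := this
  refine ⟨S'.inf id, filter_finsetInf h (fun a ha => hS' ha), T', hT', hle'⟩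


/-- Completely join-irreducible elements are join-dense in a canonical extension. -/
lemma join_dense (h : IsCanonicalExtension e) {u w : C}
    (hw : ∀ j : C, CompletelyJoinIrreducible j → j ≤ u → j ≤ w) : u ≤ w := by
  by_contra huw
  -- a closed element x ≤ u with x ≰ w
  obtain ⟨x, ⟨S, hxS, hxu⟩, hxw⟩ :
      ∃ x, (∃ S : Set L, x = sInf (e '' S) ∧ x ≤ u) ∧ ¬ x ≤ w := by
    by_contra hcon
    push_neg at hcon
    exact huw <| ((h.2.2.2.2.2.1 u).1) ▸ sSup_le (fun v hv => hcon v hv)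
  -- an open element y ≥ w with x ≰ y
  obtain ⟨y, ⟨Ty, hyT, hwy⟩, hxy⟩ :
      ∃ y, (∃ T : Set L, y = sSup (e '' T) ∧ w ≤ y) ∧ ¬ x ≤ y := by
    by_contra hcon
    push_neg at hcon
    exact hxw <| le_of_le_of_eq
      (le_sInf (fun v hv => hcon v hv)) ((h.2.2.2.2.2.1 w).2).symm
  -- Zorn's lemma on filters representing closed elements below x but not below y
  set 𝒮 : Set (Set L) := {S | sInf (e '' S) ≤ x ∧ ¬ sInf (e '' S) ≤ y} with h𝒮
  have hxF : x = sInf (e '' {a | x ≤ e a}) := closed_rep h ⟨S, hxS⟩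
  have hFx : {a | x ≤ e a} ∈ 𝒮 := ⟨hxF.ge, by rw [← hxF]; exact hxy⟩
  have hchain : ∀ c ⊆ 𝒮, IsChain (fun x1 x2 => x1 ⊆ x2) c → c.Nonempty →
      ∃ ub ∈ 𝒮, ∀ s ∈ c, s ⊆ ub := by
    intro c hc hch hne
    refine ⟨⋃₀ c, ⟨?_, ?_⟩, fun s hs => Set.subset_sUnion_of_mem hs⟩
    · obtain ⟨S₀, hS₀⟩ := hne
      exact le_trans (sInf_le_sInf (Set.image_mono (Set.subset_sUnion_of_mem hS₀)))
        (hc hS₀).1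
    · intro hle
      rw [hyT] at hle
      obtain ⟨S', T', hS', hT', hle'⟩ := h.2.2.2.2.2.2 _ _ hle
      rw [Set.sUnion_eq_biUnion] at hS'
      obtain ⟨S₀, hS₀c, hS₀⟩ :=
        DirectedOn.exists_mem_subset_of_finset_subset_biUnion hne
          (hch.directedOn) hS'
      apply (hc hS₀c).2
      have h1 : sInf (e '' S₀) ≤ e (S'.inf id) :=
        CE.filter_finsetInf h (fun a ha => sInf_le ⟨a, hS₀ ha, rfl⟩)
      have h2 : e (T'.sup id) ≤ sSup (e '' Ty) := by
        rw [CE.map_finsetSup h]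
        exact Finset.sup_le (fun b hb => le_sSup ⟨b, hT' hb, by simp⟩)
      rw [hyT]
      exact h1.trans ((CE.mono h hle').trans h2)
  obtain ⟨Sm, hsub, hmax⟩ := zorn_subset_nonempty 𝒮 hchain _ hFx
  set j : C := sInf (e '' Sm) with hj
  have hjx : j ≤ x := hmax.prop.1
  have hjy : ¬ j ≤ y := hmax.prop.2
  -- minimality: any closed z ≤ j with z ≰ y equals j
  have key : ∀ z : C, (∃ S : Set L, z = sInf (e '' S)) → z ≤ j → ¬ z ≤ y → z = j := by
    intro z hzc hzj hzy
    have hzF : z = sInf (e '' {a | z ≤ e a}) := closed_rep h hzc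
    have hmem : {a | z ≤ e a} ∈ 𝒮 := ⟨hzF.ge.trans (hzj.trans hjx), by rw [← hzF]; exact hzy⟩
    have hSm : Sm ⊆ {a | z ≤ e a} := fun a ha => hzj.trans (sInf_le ⟨a, ha, rfl⟩)
    have heq := Set.Subset.antisymm (hmax.2 hmem hSm) hSm
    rw [hzF, hj, heq]
  -- j is completely join-irreducible
  have hcji : CompletelyJoinIrreducible j := by
    intro T hT
    by_contra hjT
    apply hjy
    rw [hT]
    apply sSup_le
    intro s hs
    have hsj : s ≤ j := hT ▸ le_sSup hs
    have hsne : s ≠ j := fun hsj' => hjT (hsj' ▸ hs)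
    -- every closed element below s is ≤ y
    have := (h.2.2.2.2.2.1 s).1
    rw [this]
    apply sSup_le
    rintro v ⟨S', hv, hvs⟩
    by_contra hvy
    have := key v ⟨S', hv⟩ (hvs.trans hsj) hvy
    exact hsne (le_antisymm hsj (this ▸ hvs))
  exact hjy ((hw j hcji (hjx.trans hxu)).trans hwy)


/-- Completely join-irreducibles are prime with respect to admissible joins. -/
lemma a_prime (h : IsCanonicalExtension e) {j : C} (hj : CompletelyJoinIrreducible j)
    {M : Finset L} (hM : JoinAdmissible M) (hle : j ≤ e (M.sup id)) : ∃ m ∈ M, j ≤ e m := by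
  by_contra hcon
  push_neg at hcon
  -- the unique lower cover of j
  set js : C := sSup {v | v < j} with hjs
  have hjsj : js < j := by
    rcases lt_or_eq_of_le (sSup_le (fun v hv => hv.le) : js ≤ j) with h' | h'
    · exact h'
    · exact absurd (hj _ h'.symm) (lt_irrefl j)
  have hlt : ∀ v, v < j → v ≤ js := fun v hv => le_sSup hv
  -- an open element y above js with j ≰ y
  obtain ⟨y, ⟨Ty, hyT, hjsy⟩, hjy⟩ :
      ∃ y, (∃ T : Set L, y = sSup (e '' T) ∧ js ≤ y) ∧ ¬ j ≤ y := by
    by_contra hcon2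
    push_neg at hcon2
    exact absurd (le_of_le_of_eq (le_sInf fun v hv => hcon2 v hv)
      ((h.2.2.2.2.2.1 js).2).symm) hjsj.not_ge
  have hjF : j = sInf (e '' {a | j ≤ e a}) := cji_closed h hj
  -- an element s of the filter of j with s ≤ ⋁ M
  have hs0 : j ≤ sSup (e '' ↑M) := by
    refine hle.trans ?_
    rw [map_finsetSup h]
    exact Finset.sup_le fun b hb => le_sSup ⟨b, hb, rfl⟩
  obtain ⟨s, hjs', T₀, hT₀, hsle⟩ := closed_le_open h hjF hs0
  have hsM : s ≤ M.sup id :=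
    hsle.trans (Finset.sup_mono ((Finset.coe_subset).mp hT₀))
  -- for each m ∈ M find aₘ in the filter of j and tₘ with aₘ ⊓ m ≤ tₘ, e tₘ ≤ y
  have hstep : ∀ m : L, ∃ a t : L, m ∈ M → (j ≤ e a ∧ a ⊓ m ≤ t ∧ e t ≤ y) := by
    intro m
    by_cases hm : m ∈ M
    · have h1 : j ⊓ e m < j := lt_of_le_of_ne inf_le_left
        (fun hh => hcon m hm (by rw [← hh]; exact inf_le_right))
      have h2 : j ⊓ e m ≤ y := (hlt _ h1).trans hjsy
      have h3 : j ⊓ e m = sInf (e '' ((fun a => a ⊓ m) '' {a | j ≤ e a})) := by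
        apply le_antisymm
        · apply le_sInf
          rintro _ ⟨_, ⟨a, ha, rfl⟩, rfl⟩
          rw [h.2.1]
          exact inf_le_inf ha le_rfl
        · apply le_inf
          · conv_rhs => rw [hjF]
            apply le_sInf
            rintro _ ⟨a, ha, rfl⟩
            exact le_trans (sInf_le ⟨a ⊓ m, ⟨a, ha, rfl⟩, rfl⟩) (mono h inf_le_left)
          · refine le_trans (sInf_le ⟨⊤ ⊓ m, ⟨⊤, ?_, rfl⟩, rfl⟩) ?_
            · show j ≤ e ⊤
              rw [h.2.2.2.2.1]
              exact le_top
            · exact (mono h (le_of_eq (top_inf_eq m)))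
      have h4 : sInf (e '' ((fun a => a ⊓ m) '' {a | j ≤ e a})) ≤ sSup (e '' Ty) := by
        rw [← h3, ← hyT]; exact h2
      obtain ⟨S', T', hS', hT', hle'⟩ := h.2.2.2.2.2.2 _ _ h4
      -- choose witnesses for elements of S'
      have hwit : ∀ x : L, ∃ a : L, x ∈ S' → (j ≤ e a ∧ a ⊓ m = x) := by
        intro x
        by_cases hx : x ∈ S'
        · obtain ⟨a, ha, hax⟩ := hS' hx
          exact ⟨a, fun _ => ⟨ha, hax⟩⟩
        · exact ⟨⊤, fun hx' => absurd hx' hx⟩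
      choose g hg using hwit
      refine ⟨S'.inf g, T'.sup id, fun _ => ⟨?_, ?_, ?_⟩⟩
      · rw [map_finsetInf h]
        exact Finset.le_inf fun x hx => (hg x hx).1
      · refine le_trans ?_ hle'
        apply Finset.le_inf
        intro x hx
        have : S'.inf g ⊓ m ≤ g x ⊓ m := inf_le_inf (Finset.inf_le hx) le_rfl
        rw [(hg x hx).2] at this
        simpa using this
      · rw [map_finsetSup h, hyT]
        exact Finset.sup_le fun b hb => le_sSup ⟨b, hT' hb, by simp⟩
    · exact ⟨⊤, ⊤, fun hm' => absurd hm' hm⟩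
  choose fa ft hfa using hstep
  set a0 : L := s ⊓ M.inf fa with ha0
  have hja0 : j ≤ e a0 := by
    rw [ha0, h.2.1]
    refine le_inf hjs' ?_
    rw [map_finsetInf h]
    exact Finset.le_inf fun m hm => (hfa m hm).1
  have h1 : a0 ≤ M.sup fun m => a0 ⊓ m := by
    have heq : a0 ⊓ M.sup id = a0 := inf_eq_left.mpr (le_trans inf_le_left hsM)
    have h1' := hM a0
    rw [heq] at h1'
    exact h1'.le
  have h2 : (M.sup fun m => a0 ⊓ m) ≤ M.sup ft := by
    apply Finset.sup_le
    intro m hm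
    have : a0 ⊓ m ≤ fa m ⊓ m :=
      inf_le_inf (inf_le_right.trans (Finset.inf_le hm)) le_rfl
    exact le_trans (this.trans (hfa m hm).2.1) (Finset.le_sup hm)
  have h3 : e (M.sup ft) ≤ y := by
    rw [map_finsetSup h]
    exact Finset.sup_le fun m hm => (hfa m hm).2.2
  exact hjy (le_trans hja0 (le_trans (mono h (h1.trans h2)) h3))


lemma isAIdeal_univ : IsAIdeal (Set.univ : Set L) :=
  ⟨fun _ _ _ _ => Set.mem_univ _, fun _ _ _ => Set.mem_univ _⟩

lemma isAIdeal_aIdealGen (T : Set L) : IsAIdeal (aIdealGen T) := by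
  constructor
  · intro a ha b hb
    intro A hA
    exact (hA.1).1 a (ha A hA) b hb
  · intro M hM hadm A hA
    exact (hA.1).2 M (fun m hm => hM hm A hA) hadm

lemma subset_aIdealGen (T : Set L) : T ⊆ aIdealGen T :=
  fun t ht A hA => hA.2 ht

lemma aIdealGen_subset {T A : Set L} (hA : IsAIdeal A) (hTA : T ⊆ A) :
    aIdealGen T ⊆ A := fun _ hx => hx A ⟨hA, hTA⟩

/-- Main membership criterion for finitely generated a-ideals. -/
lemma mem_aIdealGen_iff (h : IsCanonicalExtension e) (U : Finset L) (a : L) :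
    a ∈ aIdealGen (↑U : Set L) ↔ hatSet e a ⊆ ⋃ b ∈ U, hatSet e b := by
  constructor
  · -- the set of such a is an a-ideal containing U
    intro ha
    have hD : IsAIdeal {a : L | hatSet e a ⊆ ⋃ b ∈ U, hatSet e b} := by
      constructor
      · intro a' ha' b hb x hx
        exact ha' ⟨hx.1, hx.2.trans (mono h hb)⟩
      · intro M hM hadm x hx
        obtain ⟨m, hm, hxm⟩ := a_prime h hx.1 hadm hx.2
        exact hM hm ⟨hx.1, hxm⟩
    refine ha _ ⟨hD, ?_⟩
    intro b hb x hx
    exact Set.mem_biUnion hb hx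
  · intro hhat
    intro A hA
    obtain ⟨⟨hdown, hjoin⟩, hUA⟩ := hA
    -- key distributivity fact obtained from join-density
    have key0 : ∀ c : L, c ⊓ a ≤ U.sup fun b => c ⊓ (a ⊓ b) := by
      intro c
      apply reflect h
      apply join_dense h
      intro x hx hxle
      rw [h.2.1] at hxle
      have hxa : x ≤ e a := hxle.trans inf_le_right
      have hxc : x ≤ e c := hxle.trans inf_le_left
      obtain ⟨b, hbU, hxb⟩ := Set.mem_iUnion₂.mp (hhat ⟨hx, hxa⟩)
      have : x ≤ e (c ⊓ (a ⊓ b)) := by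
        rw [h.2.1, h.2.1]
        exact le_inf hxc (le_inf hxa hxb.2)
      exact this.trans (mono h (Finset.le_sup (f := fun b => c ⊓ (a ⊓ b)) hbU))
    classical
    set M : Finset L := U.image fun b => a ⊓ b with hMdef
    have hMsup : M.sup id = U.sup fun b => a ⊓ b := by
      rw [hMdef, Finset.sup_image]; rfl
    have hsup : M.sup id = a := by
      rw [hMsup]
      apply le_antisymm (Finset.sup_le fun b _ => inf_le_left)
      have := key0 a
      rw [inf_idem] at this
      refine this.trans (le_of_eq (Finset.sup_congr rfl fun b _ => ?_))
      rw [← inf_assoc, inf_idem]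
    have hadm : JoinAdmissible M := by
      intro c
      rw [hsup]
      rw [hMdef, Finset.sup_image]
      apply le_antisymm (key0 c)
      exact Finset.sup_le fun b _ => inf_le_inf le_rfl inf_le_left
    have hMA : ↑M ⊆ A := by
      intro m hm
      rw [hMdef] at hm
      obtain ⟨b, hb, rfl⟩ := Finset.mem_image.mp (by exact_mod_cast hm)
      exact hdown b (hUA (by exact_mod_cast hb)) _ inf_le_right
    have := hjoin M hMA hadm
    rwa [hsup] at this

/-- Part (1) of the theorem. -/
lemma gen_subset_iff (h : IsCanonicalExtension e) (T U : Finset L) :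
    aIdealGen (↑T : Set L) ⊆ aIdealGen (↑U : Set L) ↔
      (⋃ a ∈ T, hatSet e a) ⊆ ⋃ b ∈ U, hatSet e b := by
  constructor
  · intro hsub
    apply Set.iUnion₂_subset
    intro a ha
    exact (mem_aIdealGen_iff h U a).mp
      (hsub (subset_aIdealGen (↑T : Set L) (by exact_mod_cast ha)))
  · intro hsub
    apply aIdealGen_subset (isAIdeal_aIdealGen _)
    intro t ht
    refine (mem_aIdealGen_iff h U t).mpr ?_
    refine subset_trans ?_ hsub
    intro x hx
    exact Set.mem_biUnion (by exact_mod_cast ht) hx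


lemma hatSet_bot (h : IsCanonicalExtension e) : hatSet e (⊥ : L) = ∅ := by
  ext x
  simp only [Set.mem_empty_iff_false, iff_false]
  rintro ⟨hx, hle⟩
  rw [h.2.2.2.1, le_bot_iff] at hle
  subst hle
  exact not_cji_bot hx

lemma mem_latticeGen {α : Type*} {G : Set (Set α)} {A : Set α} (hA : A ∈ G) :
    A ∈ latticeGen G := fun _ hF => hF.1 hA

lemma latticeGen_union {α : Type*} {G : Set (Set α)} {A B : Set α}
    (hA : A ∈ latticeGen G) (hB : B ∈ latticeGen G) : A ∪ B ∈ latticeGen G :=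
  fun F hF => hF.2.1 _ (hA F hF) _ (hB F hF)

/-- Part (2) of the theorem. -/
lemma mem_latticeGen_iff (h : IsCanonicalExtension e) (B : Set C) :
    B ∈ latticeGen {S : Set C | ∃ a : L, S = hatSet e a} ↔
      ∃ T : Finset L, B = ⋃ a ∈ T, hatSet e a := by
  classical
  constructor
  · intro hB
    refine hB {B | ∃ T : Finset L, B = ⋃ a ∈ T, hatSet e a} ⟨?_, ?_, ?_⟩
    · rintro S ⟨a, rfl⟩
      exact ⟨{a}, by simp⟩
    · rintro A ⟨T, rfl⟩ B ⟨U, rfl⟩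
      exact ⟨T ∪ U, by rw [Finset.set_biUnion_union]⟩
    · rintro A ⟨T, rfl⟩ B ⟨U, rfl⟩
      refine ⟨(T ×ˢ U).image fun p => p.1 ⊓ p.2, ?_⟩
      ext x
      simp only [Set.mem_inter_iff, Set.mem_iUnion, Finset.mem_image, Finset.mem_product,
        exists_prop]
      constructor
      · rintro ⟨⟨a, ha, hxa⟩, ⟨b, hb, hxb⟩⟩
        exact ⟨a ⊓ b, ⟨⟨a, b⟩, ⟨ha, hb⟩, rfl⟩,
          ⟨hxa.1, by rw [h.2.1]; exact le_inf hxa.2 hxb.2⟩⟩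
      · rintro ⟨_, ⟨⟨a, b⟩, ⟨ha, hb⟩, rfl⟩, hx⟩
        have h2 := hx.2
        rw [h.2.1] at h2
        exact ⟨⟨a, ha, ⟨hx.1, h2.trans inf_le_left⟩⟩,
          ⟨b, hb, ⟨hx.1, h2.trans inf_le_right⟩⟩⟩
  · rintro ⟨T, rfl⟩
    induction T using Finset.induction_on with
    | empty =>
      simpa using mem_latticeGen (G := {S : Set C | ∃ a : L, S = hatSet e a})
        ⟨(⊥ : L), (hatSet_bot h).symm⟩
    | insert _ _ ha ih =>
      rw [Finset.set_biUnion_insert]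
      exact latticeGen_union (mem_latticeGen ⟨_, rfl⟩) ih


lemma hat_congr (h : IsCanonicalExtension e) {T U : Finset L}
    (hq : aIdealGen (↑T : Set L) = aIdealGen (↑U : Set L)) :
    (⋃ a ∈ T, hatSet e a) = ⋃ a ∈ U, hatSet e a :=
  Set.Subset.antisymm ((gen_subset_iff h T U).mp hq.le) ((gen_subset_iff h U T).mp hq.ge)

lemma gen_congr (h : IsCanonicalExtension e) {T U : Finset L}
    (hq : (⋃ a ∈ T, hatSet e a) = ⋃ a ∈ U, hatSet e a) :
    aIdealGen (↑T : Set L) = aIdealGen (↑U : Set L) :=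
  Set.Subset.antisymm ((gen_subset_iff h T U).mpr hq.le) ((gen_subset_iff h U T).mpr hq.ge)

/-- The forward map of the order isomorphism. -/
noncomputable def phi (h : IsCanonicalExtension e)
    (I : {A : Set L // ∃ T : Finset L, A = aIdealGen (T : Set L)}) :
    {B : Set C // B ∈ latticeGen {S : Set C | ∃ a : L, S = hatSet e a}} :=
  ⟨⋃ a ∈ I.2.choose, hatSet e a, (mem_latticeGen_iff h _).mpr ⟨_, rfl⟩⟩

/-- The inverse map of the order isomorphism. -/
noncomputable def psi (h : IsCanonicalExtension e)
    (B : {B : Set C // B ∈ latticeGen {S : Set C | ∃ a : L, S = hatSet e a}}) :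
    {A : Set L // ∃ T : Finset L, A = aIdealGen (T : Set L)} :=
  ⟨aIdealGen (↑((mem_latticeGen_iff h B.1).mp B.2).choose : Set L), ⟨_, rfl⟩⟩

lemma phi_eq (h : IsCanonicalExtension e)
    (I : {A : Set L // ∃ T : Finset L, A = aIdealGen (T : Set L)}) (T : Finset L)
    (hI : I.1 = aIdealGen (↑T : Set L)) : (phi h I).1 = ⋃ a ∈ T, hatSet e a := by
  have h1 : aIdealGen (↑(I.2.choose) : Set L) = aIdealGen (↑T : Set L) :=
    I.2.choose_spec.symm.trans hI
  exact hat_congr h h1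

lemma psi_eq (h : IsCanonicalExtension e)
    (B : {B : Set C // B ∈ latticeGen {S : Set C | ∃ a : L, S = hatSet e a}}) (T : Finset L)
    (hB : B.1 = ⋃ a ∈ T, hatSet e a) : (psi h B).1 = aIdealGen (↑T : Set L) :=
  gen_congr h ((((mem_latticeGen_iff h B.1).mp B.2).choose_spec).symm.trans hB)

end CE

end Aux

/-- The map `⟨T⟩_ai ↦ ⋃_{a ∈ T} â` is a well-defined order isomorphism from the poset of
finitely generated a-ideals of `L` (ordered by inclusion) onto the sublattice of the
powerset of `J∞(C)` generated by the sets `â`. -/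
theorem aIdealGen_orderIso_latticeGen {L C : Type*} [Lattice L] [BoundedOrder L]
    [CompleteLattice C] (e : L → C) (h : IsCanonicalExtension e) :
    -- (1) order embedding / well-definedness
    (∀ T U : Finset L,
      aIdealGen (T : Set L) ⊆ aIdealGen (U : Set L) ↔
        (⋃ a ∈ T, hatSet e a) ⊆ ⋃ b ∈ U, hatSet e b) ∧
    -- (2) the generated sublattice consists exactly of the finite unions of the `â`
    (∀ B : Set C, B ∈ latticeGen {S : Set C | ∃ a : L, S = hatSet e a} ↔
      ∃ T : Finset L, B = ⋃ a ∈ T, hatSet e a) ∧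
    -- hence: an order isomorphism
    ∃ φ : {A : Set L // ∃ T : Finset L, A = aIdealGen (T : Set L)} ≃o
        {B : Set C // B ∈ latticeGen {S : Set C | ∃ a : L, S = hatSet e a}},
      ∀ (T : Finset L) (I : {A : Set L // ∃ T : Finset L, A = aIdealGen (T : Set L)}),
        (I : Set L) = aIdealGen (T : Set L) → (φ I : Set C) = ⋃ a ∈ T, hatSet e a := by
  refine ⟨CE.gen_subset_iff h, CE.mem_latticeGen_iff h, ?_⟩
  refine ⟨{ toFun := CE.phi h, invFun := CE.psi h,
            left_inv := ?_, right_inv := ?_, map_rel_iff' := ?_ }, ?_⟩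
  · intro I
    apply Subtype.ext
    have h1 : (CE.phi h I).1 = ⋃ a ∈ I.2.choose, hatSet e a := rfl
    have h2 := CE.psi_eq h (CE.phi h I) I.2.choose h1
    exact h2.trans I.2.choose_spec.symm
  · intro B
    apply Subtype.ext
    have h1 : (CE.psi h B).1 =
        aIdealGen (↑(((CE.mem_latticeGen_iff h B.1).mp B.2).choose) : Set L) := rfl
    have h2 := CE.phi_eq h (CE.psi h B) _ h1
    exact h2.trans (((CE.mem_latticeGen_iff h B.1).mp B.2).choose_spec).symm
  · intro I I'
    show (CE.phi h I).1 ⊆ (CE.phi h I').1 ↔ I.1 ⊆ I'.1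
    have h1 : (CE.phi h I).1 = ⋃ a ∈ I.2.choose, hatSet e a := rfl
    have h1' : (CE.phi h I').1 = ⋃ a ∈ I'.2.choose, hatSet e a := rfl
    rw [h1, h1', ← CE.gen_subset_iff h, ← I.2.choose_spec, ← I'.2.choose_spec]
  · intro T I hI
    exact CE.phi_eq h I T hI
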